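/- Let G be a minimal graph with Δ(G) ≤ k−1, k ≥ 11, having no nice k-coloring, containing two 3-vertices u, v with common neighborhood {x, y, z} where xy ∈ E(G). Let ψ be a nice k-coloring of G − {u,v} with missing-color sets C_x = {1,2}, ψ(xy) = 3, and 1 ∈ C_x ∩ C_y ∩ C_z. Then either C_z = {1,3} or C_x = C_y = C_z = {1,2}. -/

import Mathlib

open SimpleGraph

/-- The degree of a vertex `v` in a graph `G` (number of neighbors). -/
noncomputable def deg {V : Type*} (G : SimpleGraph V) (v : V) : ℕ :=
  (G.neighborSet v).ncard

/-- The maximum degree `Δ(G)` of a finite graph. -/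
noncomputable def maxDeg {V : Type*} [Fintype V] (G : SimpleGraph V) : ℕ :=
  Finset.univ.sup (deg G)

/-- A total `k`-coloring of `G`: a coloring of vertices (`cv`) and edges (`ce`) with `k`
colors such that no two adjacent vertices, no two incident edges, and no vertex and
incident edge receive the same color. -/
def IsTotalColoring {V : Type*} (G : SimpleGraph V) (k : ℕ)
    (cv : V → Fin k) (ce : Sym2 V → Fin k) : Prop :=
  (∀ u v, G.Adj u v → cv u ≠ cv v) ∧
  (∀ u v w, G.Adj u v → G.Adj u w → v ≠ w → ce s(u, v) ≠ ce s(u, w)) ∧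
  (∀ u v, G.Adj u v → cv u ≠ ce s(u, v))

def HasTotalColoring {V : Type*} (G : SimpleGraph V) (k : ℕ) : Prop :=
  ∃ cv ce, IsTotalColoring G k cv ce

/-- The total chromatic number `χ''(G)`: the least `k` admitting a total `k`-coloring. -/
noncomputable def totalChromaticNumber {V : Type*} (G : SimpleGraph V) : ℕ :=
  sInf {k | HasTotalColoring G k}

/-- `H` is a minor of `G`: there are pairwise disjoint nonempty connected branch sets in `G`,
one for each vertex of `H`, with an edge of `G` between the branch sets of any two
vertices adjacent in `H`. -/
def HasMinor {V W : Type*} (G : SimpleGraph V) (H : SimpleGraph W) : Prop :=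
  ∃ φ : W → Set V,
    (∀ w, (G.induce (φ w)).Connected) ∧
    (∀ w₁ w₂, w₁ ≠ w₂ → Disjoint (φ w₁) (φ w₂)) ∧
    (∀ w₁ w₂, H.Adj w₁ w₂ → ∃ u ∈ φ w₁, ∃ v ∈ φ w₂, G.Adj u v)

abbrev K5 : SimpleGraph (Fin 5) := ⊤

abbrev K33 : SimpleGraph (Fin 3 ⊕ Fin 3) := completeBipartiteGraph (Fin 3) (Fin 3)

/-- A nice `k`-coloring: a proper coloring of all edges and of all vertices of degree at
least `6`, such that no two adjacent or incident colored elements share a color. -/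
def IsNiceColoring {V : Type*} (G : SimpleGraph V) (k : ℕ)
    (cv : V → Fin k) (ce : Sym2 V → Fin k) : Prop :=
  (∀ u v, G.Adj u v → 6 ≤ deg G u → 6 ≤ deg G v → cv u ≠ cv v) ∧
  (∀ u v w, G.Adj u v → G.Adj u w → v ≠ w → ce s(u, v) ≠ ce s(u, w)) ∧
  (∀ u v, G.Adj u v → 6 ≤ deg G u → cv u ≠ ce s(u, v))

def HasNiceColoring {V : Type*} (G : SimpleGraph V) (k : ℕ) : Prop :=
  ∃ cv ce, IsNiceColoring G k cv ce

/-- A color `c` is missing at `v` if it is used neither on `v` (when `v` is colored,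
i.e. has degree at least 6) nor on any edge incident with `v`. -/
def MissingAt {V : Type*} {k : ℕ} (G : SimpleGraph V)
    (cv : V → Fin k) (ce : Sym2 V → Fin k) (v : V) (c : Fin k) : Prop :=
  (6 ≤ deg G v → cv v ≠ c) ∧ ∀ w, G.Adj v w → ce s(v, w) ≠ c

/-- `G` is planar: it has a drawing in the plane with injective vertex placement and
edges drawn as arcs whose interiors are pairwise disjoint and avoid all vertex points. -/
def IsPlanar {V : Type*} (G : SimpleGraph V) : Prop :=
  ∃ (p : V → ℝ × ℝ) (γ : G.edgeSet → ℝ → ℝ × ℝ),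
    Function.Injective p ∧
    (∀ e, ContinuousOn (γ e) (Set.Icc 0 1)) ∧
    (∀ e, Set.InjOn (γ e) (Set.Icc 0 1)) ∧
    (∀ e : G.edgeSet, ∀ u v : V, (e : Sym2 V) = s(u, v) →
      ({γ e 0, γ e 1} : Set (ℝ × ℝ)) = {p u, p v}) ∧
    (∀ e : G.edgeSet, ∀ w : V, ∀ t ∈ Set.Ioo (0 : ℝ) 1, γ e t ≠ p w) ∧
    (∀ e₁ e₂ : G.edgeSet, e₁ ≠ e₂ → ∀ s ∈ Set.Ioo (0 : ℝ) 1, ∀ t ∈ Set.Ioo (0 : ℝ) 1,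
      γ e₁ s ≠ γ e₂ t)

/-- A planar triangulation, i.e. an edge-maximal planar graph. -/
def IsPlanarTriangulation {W : Type*} (H : SimpleGraph W) : Prop :=
  IsPlanar H ∧ ∀ H' : SimpleGraph W, H < H' → ¬ IsPlanar H'

/-- The Wagner graph `V₈`: the 8-cycle together with its four main diagonals. -/
def wagnerGraph : SimpleGraph (ZMod 8) :=
  SimpleGraph.fromRel (fun i j => j = i + 1 ∨ j = i + 4)



section Sel
variable {α : Type*} [DecidableEq α]

/-- helper: pick an element of `s` avoiding a finset `F` of smaller cardinality. -/
lemma aux_pick_avoid (s F : Finset α) (h : F.card < s.card) : ∃ a ∈ s, a ∉ F := by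
  have h2 : 0 < (s \ F).card := lt_of_lt_of_le (Nat.sub_pos_of_lt h) (Finset.le_card_sdiff F s)
  obtain ⟨a, ha⟩ := Finset.card_pos.mp h2
  exact ⟨a, (Finset.mem_sdiff.mp ha).1, (Finset.mem_sdiff.mp ha).2⟩

lemma aux_pick_avoid1 (s : Finset α) (h : 2 ≤ s.card) (p : α) : ∃ a ∈ s, a ≠ p := by
  obtain ⟨a, ha, hap⟩ := aux_pick_avoid s {p} (by simp only [Finset.card_singleton]; omega)
  exact ⟨a, ha, by simpa using hap⟩

lemma aux_pick_avoid2 (s : Finset α) (h : 3 ≤ s.card) (p q : α) : ∃ a ∈ s, a ≠ p ∧ a ≠ q := by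
  obtain ⟨a, ha, hap⟩ := aux_pick_avoid s {p, q}
    (lt_of_le_of_lt (Finset.card_insert_le _ _) (by simp only [Finset.card_singleton]; omega))
  simp only [Finset.mem_insert, Finset.mem_singleton, not_or] at hap
  exact ⟨a, ha, hap⟩

lemma aux_pick_avoid3 (s : Finset α) (h : 4 ≤ s.card) (p q r : α) :
    ∃ a ∈ s, a ≠ p ∧ a ≠ q ∧ a ≠ r := by
  obtain ⟨a, ha, hap⟩ := aux_pick_avoid s {p, q, r}
    (lt_of_le_of_lt (le_trans (Finset.card_insert_le _ _)
      (by exact Nat.succ_le_succ (Finset.card_insert_le _ _))) (by simp only [Finset.card_singleton]; omega))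
  simp only [Finset.mem_insert, Finset.mem_singleton, not_or] at hap
  exact ⟨a, ha, hap.1, hap.2.1, hap.2.2⟩

/-- The selection predicate: two "rows" of representatives, distinct within rows,
and distinct within each column. -/
def Sel (A B C : Finset α) : Prop :=
  ∃ a₁ ∈ A, ∃ a₂ ∈ B, ∃ a₃ ∈ C, ∃ b₁ ∈ A, ∃ b₂ ∈ B, ∃ b₃ ∈ C,
    a₁ ≠ a₂ ∧ a₁ ≠ a₃ ∧ a₂ ≠ a₃ ∧ b₁ ≠ b₂ ∧ b₁ ≠ b₃ ∧ b₂ ≠ b₃ ∧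
    a₁ ≠ b₁ ∧ a₂ ≠ b₂ ∧ a₃ ≠ b₃

/-- swap trick: pick a pair in `B` avoiding given `a₁ ≠ b₁` coordinatewise. -/
lemma aux_swap (B : Finset α) (hB : 2 ≤ B.card) (a₁ b₁ : α) (hab : a₁ ≠ b₁) :
    ∃ a₂ ∈ B, ∃ b₂ ∈ B, a₂ ≠ b₂ ∧ a₂ ≠ a₁ ∧ b₂ ≠ b₁ := by
  obtain ⟨p, hp, q, hq, hpq⟩ := Finset.one_lt_card.mp hB
  by_cases h : p = a₁ ∨ q = b₁
  · refine ⟨q, hq, p, hp, hpq.symm, ?_, ?_⟩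
    · rcases h with rfl | rfl
      · exact hpq.symm
      · exact hab.symm
    · rcases h with rfl | rfl
      · exact fun hc => hab (hc ▸ rfl)
      · exact fun hc => hpq (hc ▸ rfl)
  · push_neg at h
    exact ⟨p, hp, q, hq, hpq, h.1, h.2⟩

lemma sel3 (A B C : Finset α) (hA : 2 ≤ A.card) (hB : 2 ≤ B.card) (hC : 4 ≤ C.card) :
    Sel A B C := by
  obtain ⟨a₁, ha₁, b₁, hb₁, hab⟩ := Finset.one_lt_card.mp hA
  obtain ⟨a₂, ha₂, b₂, hb₂, h2, h2a, h2b⟩ := aux_swap B hB a₁ b₁ hab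
  obtain ⟨a₃, ha₃, h3a, h3b⟩ := aux_pick_avoid2 C (by omega) a₁ a₂
  obtain ⟨b₃, hb₃, g1, g2, g3⟩ := aux_pick_avoid3 C hC b₁ b₂ a₃
  exact ⟨a₁, ha₁, a₂, ha₂, a₃, ha₃, b₁, hb₁, b₂, hb₂, b₃, hb₃,
    h2a.symm, h3a.symm, h3b.symm, h2b.symm, g1.symm, g2.symm, hab, h2, g3.symm⟩

lemma sel2 (A B C : Finset α) (hA : 2 ≤ A.card) (hB : 2 ≤ B.card) (hC : 2 ≤ C.card)
    (c₁ : α) (hc : c₁ ∈ C) (hcA : c₁ ∉ A) (hcB : c₁ ∉ B) :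
    Sel A B C ∨ (A.card = 2 ∧ B.card = 2 ∧ C \ {c₁} ⊆ A ∩ B) := by
  -- a helper to conclude Sel from a "core" selection avoiding e
  have core : ∀ e ∈ C, e ≠ c₁ →
      (∃ a₁ ∈ A, ∃ b₁ ∈ A, ∃ a₂ ∈ B, ∃ b₂ ∈ B,
        a₁ ≠ b₁ ∧ a₂ ≠ b₂ ∧ a₁ ≠ a₂ ∧ b₁ ≠ b₂ ∧ b₁ ≠ e ∧ b₂ ≠ e) → Sel A B C := by
    rintro e he hec ⟨a₁, ha₁, b₁, hb₁, a₂, ha₂, b₂, hb₂, k1, k2, k3, k4, k5, k6⟩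
    exact ⟨a₁, ha₁, a₂, ha₂, c₁, hc, b₁, hb₁, b₂, hb₂, e, he,
      k3, fun h => hcA (h ▸ ha₁), fun h => hcB (h ▸ ha₂),
      k4, k5, k6, k1, k2, fun h => hec h.symm⟩
  by_cases hsub : C \ {c₁} ⊆ A ∩ B
  · by_cases hA2 : A.card = 2
    · by_cases hB2 : B.card = 2
      · exact Or.inr ⟨hA2, hB2, hsub⟩
      · -- |B| ≥ 3  : construction R5
        left
        have hB3 : 3 ≤ B.card := by omega
        obtain ⟨e, heC, hec⟩ := aux_pick_avoid1 C hC c₁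
        have heAB := hsub (Finset.mem_sdiff.mpr ⟨heC, by simpa using hec⟩)
        have heA := (Finset.mem_inter.mp heAB).1
        have heB := (Finset.mem_inter.mp heAB).2
        obtain ⟨β, hβA, hβe⟩ := aux_pick_avoid1 A hA e
        obtain ⟨b₂, hb₂, hb₂e, hb₂β⟩ := aux_pick_avoid2 B hB3 e β
        obtain ⟨a₂, ha₂, ha₂b, ha₂e⟩ := aux_pick_avoid2 B hB3 b₂ e
        refine core e heC hec ⟨e, heA, β, hβA, a₂, ha₂, b₂, hb₂,
          hβe.symm, ha₂b, ha₂e.symm, hb₂β.symm, hβe, hb₂e⟩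
    · -- |A| ≥ 3 : construction R4
      left
      have hA3 : 3 ≤ A.card := by omega
      obtain ⟨e, heC, hec⟩ := aux_pick_avoid1 C hC c₁
      have heAB := hsub (Finset.mem_sdiff.mpr ⟨heC, by simpa using hec⟩)
      have heA := (Finset.mem_inter.mp heAB).1
      have heB := (Finset.mem_inter.mp heAB).2
      obtain ⟨β, hβB, hβe⟩ := aux_pick_avoid1 B hB e
      obtain ⟨b₁, hb₁, hb₁e, hb₁β⟩ := aux_pick_avoid2 A hA3 e β
      obtain ⟨a₁, ha₁, ha₁b, ha₁e⟩ := aux_pick_avoid2 A hA3 b₁ e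
      exact core e heC hec ⟨a₁, ha₁, b₁, hb₁, e, heB, β, hβB,
        ha₁b, fun h => hβe h.symm, ha₁e, hb₁β, hb₁e, hβe⟩
  · -- some e in C \ {c₁} outside A ∩ B
    left
    obtain ⟨e, he, heAB⟩ := Finset.not_subset.mp hsub
    have heC := (Finset.mem_sdiff.mp he).1
    have hec : e ≠ c₁ := by simpa using (Finset.mem_sdiff.mp he).2
    by_cases heA : e ∈ A
    · -- e ∉ B : construction R3
      have heB : e ∉ B := fun h => heAB (Finset.mem_inter.mpr ⟨heA, h⟩)
      obtain ⟨β, hβA, hβe⟩ := aux_pick_avoid1 A hA e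
      obtain ⟨b₂, hb₂, hb₂β⟩ := aux_pick_avoid1 B hB β
      obtain ⟨a₂, ha₂, ha₂b⟩ := aux_pick_avoid1 B hB b₂
      exact core e heC hec ⟨e, heA, β, hβA, a₂, ha₂, b₂, hb₂,
        fun h => hβe h.symm, ha₂b, fun h => heB (h ▸ ha₂), fun h => hb₂β h.symm,
        hβe, fun h => heB (h ▸ hb₂)⟩
    · by_cases heB : e ∈ B
      · -- construction R2
        obtain ⟨β, hβB, hβe⟩ := aux_pick_avoid1 B hB e
        obtain ⟨b₁, hb₁, hb₁β⟩ := aux_pick_avoid1 A hA β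
        obtain ⟨a₁, ha₁, ha₁b⟩ := aux_pick_avoid1 A hA b₁
        exact core e heC hec ⟨a₁, ha₁, b₁, hb₁, e, heB, β, hβB,
          ha₁b, fun h => hβe h.symm, fun h => heA (h ▸ ha₁), hb₁β, fun h => heA (h ▸ hb₁), hβe⟩
      · -- construction R1
        obtain ⟨a₁, ha₁, b₁, hb₁, hab⟩ := Finset.one_lt_card.mp hA
        obtain ⟨a₂, ha₂, b₂, hb₂, k2, k2a, k2b⟩ := aux_swap B hB a₁ b₁ hab
        exact core e heC hec ⟨a₁, ha₁, b₁, hb₁, a₂, ha₂, b₂, hb₂,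
          hab, k2, k2a.symm, k2b.symm, fun h => heA (h ▸ hb₁), fun h => heB (h ▸ hb₂)⟩

lemma pair_split {α : Type*} [DecidableEq α] {s : Finset α} {c : α}
    (h2 : s.card = 2) (hc : c ∈ s) : ∃ d, d ≠ c ∧ s = {c, d} := by
  obtain ⟨p, q, hpq, rfl⟩ := Finset.card_eq_two.mp h2
  rcases Finset.mem_insert.mp hc with rfl | hq
  · exact ⟨q, hpq.symm, rfl⟩
  · rw [Finset.mem_singleton] at hq
    subst hq
    exact ⟨p, hpq, Finset.pair_comm p c⟩

lemma mem_of_card_two {α : Type*} [DecidableEq α] {s : Finset α} {a b c : α}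
    (h2 : s.card = 2) (ha : a ∈ s) (hb : b ∈ s) (hab : a ≠ b) (hc : c ∈ s) :
    c = a ∨ c = b := by
  have hsub : ({a, b} : Finset α) ⊆ s := by
    intro w hw
    rcases Finset.mem_insert.mp hw with rfl | hw
    · exact ha
    · rw [Finset.mem_singleton] at hw
      exact hw ▸ hb
  have heq := Finset.eq_of_subset_of_card_le hsub (by rw [h2, Finset.card_pair hab])
  rw [← heq] at hc
  simpa using hc

end Sel


/-- Claim 2(ii): with `G` minimal without a nice `k`-coloring, `u`, `v` two `3`-vertices
with common neighborhood `{x, y, z}`, `xy ∈ E(G)`, `ψ = (cv, ce)` a nice coloring of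
`G - {u, v}`, `Cx = {c₁, c₂}`, `ce(xy) = c₃` and `c₁ ∈ Cx ∩ Cy ∩ Cz`: then either
`Cz = {c₁, c₃}` or `Cx = Cy = Cz = {c₁, c₂}`. -/
theorem missing_colors_claim2ii {V : Type*} [Fintype V] (G : SimpleGraph V) (k : ℕ)
    (hk : 11 ≤ k) (hΔ : maxDeg G ≤ k - 1)
    (hG : ¬ HasNiceColoring G k)
    (hmin : ∀ H : SimpleGraph V, H < G → HasNiceColoring H k)
    (u v x y z : V) (huv : u ≠ v)
    (hu3 : deg G u = 3) (hv3 : deg G v = 3)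
    (hNu : G.neighborSet u = {x, y, z}) (hNv : G.neighborSet v = {x, y, z})
    (hxy : G.Adj x y)
    (cv : V → Fin k) (ce : Sym2 V → Fin k)
    (hψ : IsNiceColoring (G.deleteEdges (G.incidenceSet u ∪ G.incidenceSet v)) k cv ce)
    (Cx Cy Cz : Finset (Fin k))
    (hCy : Cy.card = 2) (hCz : Cz.card = 2)
    (hmx : ∀ c ∈ Cx,
      MissingAt (G.deleteEdges (G.incidenceSet u ∪ G.incidenceSet v)) cv ce x c)
    (hmy : ∀ c ∈ Cy,
      MissingAt (G.deleteEdges (G.incidenceSet u ∪ G.incidenceSet v)) cv ce y c)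
    (hmz : ∀ c ∈ Cz,
      MissingAt (G.deleteEdges (G.incidenceSet u ∪ G.incidenceSet v)) cv ce z c)
    (c₁ c₂ c₃ : Fin k) (h12 : c₁ ≠ c₂)
    (hCxEq : Cx = {c₁, c₂}) (hc3 : ce s(x, y) = c₃)
    (hc1 : c₁ ∈ Cx ∩ Cy ∩ Cz) :
    Cz = {c₁, c₃} ∨ (Cy = {c₁, c₂} ∧ Cz = {c₁, c₂}) := by
  classical
  set H := G.deleteEdges (G.incidenceSet u ∪ G.incidenceSet v) with hHdef
  -- basic adjacencies
  have hux : G.Adj u x := by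
    have : x ∈ G.neighborSet u := by rw [hNu]; exact Set.mem_insert _ _
    exact this
  have huy : G.Adj u y := by
    have : y ∈ G.neighborSet u := by rw [hNu]; simp
    exact this
  have huz : G.Adj u z := by
    have : z ∈ G.neighborSet u := by rw [hNu]; simp
    exact this
  have hvx : G.Adj v x := by
    have : x ∈ G.neighborSet v := by rw [hNv]; exact Set.mem_insert _ _
    exact this
  have hvy : G.Adj v y := by
    have : y ∈ G.neighborSet v := by rw [hNv]; simp
    exact this
  have hvz : G.Adj v z := by
    have : z ∈ G.neighborSet v := by rw [hNv]; simp
    exact this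
  have hNuMem : ∀ w, G.Adj u w → w = x ∨ w = y ∨ w = z := by
    intro w hw
    have : w ∈ G.neighborSet u := hw
    rw [hNu] at this; simpa using this
  have hNvMem : ∀ w, G.Adj v w → w = x ∨ w = y ∨ w = z := by
    intro w hw
    have : w ∈ G.neighborSet v := hw
    rw [hNv] at this; simpa using this
  have hxu : x ≠ u := hux.ne'
  have hyu : y ≠ u := huy.ne'
  have hzu : z ≠ u := huz.ne'
  have hxv : x ≠ v := hvx.ne'
  have hyv : y ≠ v := hvy.ne'
  have hzv : z ≠ v := hvz.ne'
  have hxy' : x ≠ y := hxy.ne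
  -- distinctness of x, y, z
  have hNcard : ({x, y, z} : Set V).ncard = 3 := by
    rw [← hNu]; exact hu3
  have hxz : x ≠ z := by
    rintro rfl
    have h1 : ({x, y, x} : Set V) = {x, y} := by ext w; simp only [Set.mem_insert_iff, Set.mem_singleton_iff]; tauto
    rw [h1] at hNcard
    have h2 : ({x, y} : Set V).ncard ≤ 2 :=
      le_trans (Set.ncard_insert_le _ _) (by simp [Set.ncard_singleton])
    omega
  have hyz : y ≠ z := by
    rintro rfl
    have h1 : ({x, y, y} : Set V) = {x, y} := by ext w; simp only [Set.mem_insert_iff, Set.mem_singleton_iff]; tauto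
    rw [h1] at hNcard
    have h2 : ({x, y} : Set V).ncard ≤ 2 :=
      le_trans (Set.ncard_insert_le _ _) (by simp [Set.ncard_singleton])
    omega
  -- H adjacency characterization
  have hHadj : ∀ a b : V, H.Adj a b ↔ (G.Adj a b ∧ a ≠ u ∧ b ≠ u ∧ a ≠ v ∧ b ≠ v) := by
    intro a b
    rw [hHdef, SimpleGraph.deleteEdges_adj]
    constructor
    · rintro ⟨hab, hn⟩
      refine ⟨hab, ?_, ?_, ?_, ?_⟩ <;> rintro rfl
      · exact hn (Or.inl ⟨hab, by simp⟩)
      · exact hn (Or.inl ⟨hab, by simp⟩)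
      · exact hn (Or.inr ⟨hab, by simp⟩)
      · exact hn (Or.inr ⟨hab, by simp⟩)
    · rintro ⟨hab, h1, h2, h3, h4⟩
      refine ⟨hab, ?_⟩
      rintro (⟨-, hm⟩ | ⟨-, hm⟩) <;> rw [Sym2.mem_iff] at hm <;> tauto
  clear_value H
  have hHxy : H.Adj x y := (hHadj x y).mpr ⟨hxy, hxu, hyu, hxv, hyv⟩
  -- neighbor sets in H
  have hNH : ∀ t : V, t ≠ u → t ≠ v → H.neighborSet t = G.neighborSet t \ {u, v} := by
    intro t htu htv
    ext w
    simp only [SimpleGraph.mem_neighborSet, Set.mem_diff, Set.mem_insert_iff,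
      Set.mem_singleton_iff, hHadj t w]
    constructor
    · rintro ⟨h, -, h2, -, h4⟩; exact ⟨h, by tauto⟩
    · rintro ⟨h, hw⟩
      exact ⟨h, htu, fun hh => hw (Or.inl hh), htv, fun hh => hw (Or.inr hh)⟩
  -- degrees
  have hdegG : ∀ t : V, deg G t ≤ k - 1 := fun t =>
    le_trans (Finset.le_sup (Finset.mem_univ t)) hΔ
  have hdeg2 : ∀ t : V, G.Adj u t → G.Adj v t → deg H t + 2 = deg G t := by
    intro t h1 h2
    have hsub : ({u, v} : Set V) ⊆ G.neighborSet t := by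
      intro w hw
      rcases hw with rfl | hw
      · exact h1.symm
      · rw [Set.mem_singleton_iff] at hw; subst hw; exact h2.symm
    have hd : deg H t = deg G t - ({u, v} : Set V).ncard := by
      show (H.neighborSet t).ncard = (G.neighborSet t).ncard - _
      rw [hNH t h1.ne' h2.ne', Set.ncard_diff hsub (Set.toFinite _)]
    have hpair : ({u, v} : Set V).ncard = 2 := Set.ncard_pair huv
    have h2le : 2 ≤ deg G t := by
      have := Set.ncard_le_ncard hsub (Set.toFinite _)
      rw [hpair] at this; exact this
    rw [hpair] at hd
    omega
  have hdegEq : ∀ a : V, a ≠ u → a ≠ v → ¬ G.Adj u a → ¬ G.Adj v a → deg H a = deg G a := by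
    intro a h1 h2 h3 h4
    have : H.neighborSet a = G.neighborSet a := by
      rw [hNH a h1 h2]
      ext w
      simp only [Set.mem_diff, SimpleGraph.mem_neighborSet, Set.mem_insert_iff,
        Set.mem_singleton_iff]
      constructor
      · tauto
      · intro h
        refine ⟨h, ?_⟩
        rintro (rfl | rfl)
        · exact h3 h.symm
        · exact h4 h.symm
    show (H.neighborSet a).ncard = (G.neighborSet a).ncard
    rw [this]
  -- the recolored edge coloring
  set ce1 : Sym2 V → Fin k := Function.update ce s(x, y) c₁ with hce1def
  have hce1xy : ce1 s(x, y) = c₁ := Function.update_self _ _ _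
  have hce1ne : ∀ e, e ≠ s(x, y) → ce1 e = ce e := fun e he => Function.update_of_ne he _ _
  -- color membership facts
  have hc1x : c₁ ∈ Cx := (Finset.mem_inter.mp (Finset.mem_inter.mp hc1).1).1
  have hc1y : c₁ ∈ Cy := (Finset.mem_inter.mp (Finset.mem_inter.mp hc1).1).2
  have hc1z : c₁ ∈ Cz := (Finset.mem_inter.mp hc1).2
  have hc2x : c₂ ∈ Cx := by rw [hCxEq]; simp
  have hc31 : c₃ ≠ c₁ := by
    intro h
    exact ((hmx c₁ hc1x).2 y hHxy) (by rw [hc3, h])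
  have hc32 : c₃ ≠ c₂ := by
    intro h
    exact ((hmx c₂ hc2x).2 y hHxy) (by rw [hc3, h])
  -- niceness of the recolored coloring on H
  have hψ' : IsNiceColoring H k cv ce1 := by
    obtain ⟨h1, h2, h3⟩ := hψ
    refine ⟨h1, ?_, ?_⟩
    · intro a b w hab haw hbw
      by_cases e1 : s(a, b) = s(x, y) <;> by_cases e2 : s(a, w) = s(x, y)
      · exfalso
        rw [Sym2.eq_iff] at e1 e2
        rcases e1 with ⟨rfl, rfl⟩ | ⟨rfl, rfl⟩ <;> rcases e2 with ⟨e2a, e2b⟩ | ⟨e2a, e2b⟩ <;>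
          first
          | exact hbw e2b.symm
          | exact hxy' e2a
          | exact hxy' e2a.symm
      · rw [e1, hce1xy, hce1ne _ e2]
        rw [Sym2.eq_iff] at e1
        rcases e1 with ⟨rfl, rfl⟩ | ⟨rfl, rfl⟩
        · exact fun h => ((hmx c₁ hc1x).2 w haw) h.symm
        · exact fun h => ((hmy c₁ hc1y).2 w haw) h.symm
      · rw [e2, hce1xy, hce1ne _ e1]
        rw [Sym2.eq_iff] at e2
        rcases e2 with ⟨rfl, rfl⟩ | ⟨rfl, rfl⟩
        · exact (hmx c₁ hc1x).2 b hab
        · exact (hmy c₁ hc1y).2 b hab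
      · rw [hce1ne _ e1, hce1ne _ e2]
        exact h2 a b w hab haw hbw
    · intro a b hab hdeg
      by_cases e1 : s(a, b) = s(x, y)
      · rw [e1, hce1xy]
        rw [Sym2.eq_iff] at e1
        rcases e1 with ⟨rfl, -⟩ | ⟨rfl, -⟩
        · exact (hmx c₁ hc1x).1 hdeg
        · exact (hmy c₁ hc1y).1 hdeg
      · rw [hce1ne _ e1]
        exact h3 a b hab hdeg
  -- "problematic" vertices: degree ≥ 6 in G but < 6 in H
  set P : V → Prop := fun t => 6 ≤ deg G t ∧ deg H t < 6 with hPdef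
  have hProbMem : ∀ t, P t → t = x ∨ t = y ∨ t = z := by
    intro t ht
    obtain ⟨h6, hlt⟩ := ht
    by_contra hc
    push_neg at hc
    have htu : t ≠ u := by rintro rfl; rw [hu3] at h6; omega
    have htv : t ≠ v := by rintro rfl; rw [hv3] at h6; omega
    have h1 : ¬ G.Adj u t := fun h => by
      rcases hNuMem t h with rfl | rfl | rfl <;> simp at hc <;> tauto
    have h2 : ¬ G.Adj v t := fun h => by
      rcases hNvMem t h with rfl | rfl | rfl <;> simp at hc <;> tauto
    have := hdegEq t htu htv h1 h2
    omega
  -- picking a fresh color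
  have hpickc : ∀ F : Finset (Fin k), F.card < k → ∃ c, c ∉ F := by
    intro F hF
    by_contra h
    push_neg at h
    have hsub : (Finset.univ : Finset (Fin k)) ⊆ F := fun c _ => h c
    have := Finset.card_le_card hsub
    rw [Finset.card_univ, Fintype.card_fin] at this
    omega
  have hpickF : ∀ (t : V) (cvp : V → Fin k), deg H t < 6 → ∃ c : Fin k,
      (∀ w, H.Adj t w → ce1 s(t, w) ≠ c) ∧ (∀ w, H.Adj t w → cvp w ≠ c) := by
    intro t cvp hlt
    set N := (H.neighborSet t).toFinite.toFinset with hN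
    have hNc : N.card = deg H t := by
      rw [hN]; exact (Set.ncard_eq_toFinset_card _ _).symm
    set F := N.image (fun w => ce1 s(t, w)) ∪ N.image cvp with hF
    have hFc : F.card < k := by
      have h1 := Finset.card_union_le (N.image (fun w => ce1 s(t, w))) (N.image cvp)
      have h2 := Finset.card_image_le (s := N) (f := fun w => ce1 s(t, w))
      have h3 := Finset.card_image_le (s := N) (f := cvp)
      rw [hF]
      omega
    obtain ⟨c, hc⟩ := hpickc F hFc
    have hmemN : ∀ w, H.Adj t w → w ∈ N := by
      intro w hw
      rw [hN, Set.Finite.mem_toFinset]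
      exact hw
    refine ⟨c, ?_, ?_⟩
    · intro w hw heq
      exact hc (Finset.mem_union_left _ (Finset.mem_image.mpr ⟨w, hmemN w hw, heq⟩))
    · intro w hw heq
      exact hc (Finset.mem_union_right _ (Finset.mem_image.mpr ⟨w, hmemN w hw, heq⟩))
  -- recolor x
  have hpx : ∃ px : Fin k,
      (P x → (∀ w, H.Adj x w → ce1 s(x, w) ≠ px) ∧ (∀ w, H.Adj x w → cv w ≠ px)) ∧
      (¬ P x → px = cv x) := by
    by_cases h : P x
    · obtain ⟨c, hc⟩ := hpickF x cv h.2
      exact ⟨c, fun _ => hc, fun hn => absurd h hn⟩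
    · exact ⟨cv x, fun hp => absurd hp h, fun _ => rfl⟩
  obtain ⟨px, hpxP, hpxN⟩ := hpx
  set cv1 : V → Fin k := Function.update cv x px with hcv1def
  have hcv1x : cv1 x = px := Function.update_self _ _ _
  have hcv1ne : ∀ w, w ≠ x → cv1 w = cv w := fun w hw => Function.update_of_ne hw _ _
  -- recolor y
  have hpy : ∃ py : Fin k,
      (P y → (∀ w, H.Adj y w → ce1 s(y, w) ≠ py) ∧ (∀ w, H.Adj y w → cv1 w ≠ py)) ∧
      (¬ P y → py = cv y) := by
    by_cases h : P y
    · obtain ⟨c, hc⟩ := hpickF y cv1 h.2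
      exact ⟨c, fun _ => hc, fun hn => absurd h hn⟩
    · exact ⟨cv y, fun hp => absurd hp h, fun _ => rfl⟩
  obtain ⟨py, hpyP, hpyN⟩ := hpy
  set cv2 : V → Fin k := Function.update cv1 y py with hcv2def
  have hcv2y : cv2 y = py := Function.update_self _ _ _
  have hcv2ne : ∀ w, w ≠ y → cv2 w = cv1 w := fun w hw => Function.update_of_ne hw _ _
  -- recolor z
  have hpz : ∃ pz : Fin k,
      (P z → (∀ w, H.Adj z w → ce1 s(z, w) ≠ pz) ∧ (∀ w, H.Adj z w → cv2 w ≠ pz)) ∧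
      (¬ P z → pz = cv z) := by
    by_cases h : P z
    · obtain ⟨c, hc⟩ := hpickF z cv2 h.2
      exact ⟨c, fun _ => hc, fun hn => absurd h hn⟩
    · exact ⟨cv z, fun hp => absurd hp h, fun _ => rfl⟩
  obtain ⟨pz, hpzP, hpzN⟩ := hpz
  set cvF : V → Fin k := Function.update cv2 z pz with hcvFdef
  have hcvFz : cvF z = pz := Function.update_self _ _ _
  have hcvFne : ∀ w, w ≠ z → cvF w = cv2 w := fun w hw => Function.update_of_ne hw _ _
  -- evaluation lemmas for cvF
  have hcvFx : cvF x = px := by rw [hcvFne x hxz, hcv2ne x hxy']; exact hcv1x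
  have hcvFy : cvF y = py := by rw [hcvFne y hyz]; exact hcv2y
  have hcvF0 : ∀ w, w ≠ x → w ≠ y → w ≠ z → cvF w = cv w := by
    intro w h1 h2 h3
    rw [hcvFne w h3, hcv2ne w h2, hcv1ne w h1]
  have hcvstx : ¬ P x → cvF x = cv x := fun h => by rw [hcvFx, hpxN h]
  have hcvsty : ¬ P y → cvF y = cv y := fun h => by rw [hcvFy, hpyN h]
  have hcvstz : ¬ P z → cvF z = cv z := fun h => by rw [hcvFz, hpzN h]
  clear_value cvF cv2 cv1 ce1
  -- stability
  have hstable : ∀ a, a ≠ u → a ≠ v → ¬ P a → 6 ≤ deg G a → cvF a = cv a ∧ 6 ≤ deg H a := by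
    intro a hau hav hPa h6
    have hdH : ∀ h : a = x ∨ a = y ∨ a = z, 6 ≤ deg H a := by
      intro h
      have : ¬ (deg H a < 6) := fun hl => hPa ⟨h6, hl⟩
      omega
    by_cases h1 : a = x
    · subst h1; exact ⟨hcvstx hPa, hdH (Or.inl rfl)⟩
    by_cases h2 : a = y
    · subst h2; exact ⟨hcvsty hPa, hdH (Or.inr (Or.inl rfl))⟩
    by_cases h3 : a = z
    · subst h3; exact ⟨hcvstz hPa, hdH (Or.inr (Or.inr rfl))⟩
    have hnu : ¬ G.Adj u a := fun h => by rcases hNuMem a h with rfl | rfl | rfl <;> tauto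
    have hnv : ¬ G.Adj v a := fun h => by rcases hNvMem a h with rfl | rfl | rfl <;> tauto
    have := hdegEq a hau hav hnu hnv
    exact ⟨hcvF0 a h1 h2 h3, by omega⟩
  -- avoidance lemmas
  have hAvoid_x : P x → ∀ w, H.Adj x w →
      (cvF x ≠ ce1 s(x, w)) ∧ (cvF w = cv w → cvF x ≠ cvF w) := by
    intro hP w hw
    obtain ⟨hce, hcv⟩ := hpxP hP
    refine ⟨?_, ?_⟩
    · rw [hcvFx]; exact fun h => hce w hw h.symm
    · intro heq; rw [hcvFx, heq]; exact fun h => hcv w hw h.symm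
  have hAvoid_y : P y → ∀ w, H.Adj y w →
      (cvF y ≠ ce1 s(y, w)) ∧ (cvF w = cv1 w → cvF y ≠ cvF w) := by
    intro hP w hw
    obtain ⟨hce, hcv⟩ := hpyP hP
    refine ⟨?_, ?_⟩
    · rw [hcvFy]; exact fun h => hce w hw h.symm
    · intro heq; rw [hcvFy, heq]; exact fun h => hcv w hw h.symm
  have hAvoid_z : P z → ∀ w, H.Adj z w →
      (cvF z ≠ ce1 s(z, w)) ∧ (cvF w = cv2 w → cvF z ≠ cvF w) := by
    intro hP w hw
    obtain ⟨hce, hcv⟩ := hpzP hP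
    refine ⟨?_, ?_⟩
    · rw [hcvFz]; exact fun h => hce w hw h.symm
    · intro heq; rw [hcvFz, heq]; exact fun h => hcv w hw h.symm
  clear hpxP hpyP hpzP hpxN hpyN hpzN
  -- the new vertex coloring is proper on ≥6-degree vertices
  have halfx : ∀ b, H.Adj x b → P x → ¬ (P z ∧ b = z) → ¬ (P y ∧ b = y) → cvF x ≠ cvF b := by
    intro b hab hPa hz2 hy2
    refine (hAvoid_x hPa b hab).2 ?_
    by_cases h1 : b = y
    · rw [h1]; exact hcvsty (fun h => hy2 ⟨h, h1⟩)
    by_cases h2 : b = z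
    · rw [h2]; exact hcvstz (fun h => hz2 ⟨h, h2⟩)
    · exact hcvF0 b (fun h => hab.ne h.symm) h1 h2
  have halfy : ∀ b, H.Adj y b → P y → ¬ (P z ∧ b = z) → cvF y ≠ cvF b := by
    intro b hab hPa hz2
    refine (hAvoid_y hPa b hab).2 ?_
    by_cases h2 : b = z
    · have hnPz : ¬ P z := fun h => hz2 ⟨h, h2⟩
      rw [h2, hcvstz hnPz, hcv1ne z (Ne.symm hxz)]
    by_cases h1 : b = x
    · rw [h1, hcvFx, hcv1x]
    · have hby : b ≠ y := fun h => hab.ne h.symm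
      rw [hcvF0 b h1 hby h2, hcv1ne b h1]
  have halfz : ∀ b, H.Adj z b → P z → cvF z ≠ cvF b := by
    intro b hab hPa
    refine (hAvoid_z hPa b hab).2 ?_
    by_cases h1 : b = x
    · rw [h1, hcvFx, hcv2ne x hxy', hcv1x]
    by_cases h2 : b = y
    · rw [h2, hcvFy, hcv2y]
    · have hbz : b ≠ z := fun h => hab.ne h.symm
      rw [hcv2ne b h2, hcv1ne b h1, hcvF0 b h1 h2 hbz]
  have hVne : ∀ a b, G.Adj a b → 6 ≤ deg G a → 6 ≤ deg G b → cvF a ≠ cvF b := by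
    intro a b hab h6a h6b
    have hau : a ≠ u := by rintro rfl; rw [hu3] at h6a; omega
    have hbu : b ≠ u := by rintro rfl; rw [hu3] at h6b; omega
    have hav : a ≠ v := by rintro rfl; rw [hv3] at h6a; omega
    have hbv : b ≠ v := by rintro rfl; rw [hv3] at h6b; omega
    have hH' : H.Adj a b := (hHadj a b).mpr ⟨hab, hau, hbu, hav, hbv⟩
    by_cases hz1 : P z ∧ a = z
    · rw [hz1.2]
      exact halfz b (by rw [← hz1.2]; exact hH') hz1.1
    by_cases hz2 : P z ∧ b = z
    · rw [hz2.2]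
      exact (halfz a (by rw [← hz2.2]; exact hH'.symm) hz2.1).symm
    by_cases hy1 : P y ∧ a = y
    · rw [hy1.2]
      exact halfy b (by rw [← hy1.2]; exact hH') hy1.1 hz2
    by_cases hy2 : P y ∧ b = y
    · rw [hy2.2]
      exact (halfy a (by rw [← hy2.2]; exact hH'.symm) hy2.1 hz1).symm
    by_cases hx1 : P x ∧ a = x
    · rw [hx1.2]
      exact halfx b (by rw [← hx1.2]; exact hH') hx1.1 hz2 hy2
    by_cases hx2 : P x ∧ b = x
    · rw [hx2.2]
      exact (halfx a (by rw [← hx2.2]; exact hH'.symm) hx2.1 hz1 hy1).symm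
    have hPa : ¬ P a := fun h => by
      rcases hProbMem a h with h' | h' | h'
      · exact hx1 ⟨h' ▸ h, h'⟩
      · exact hy1 ⟨h' ▸ h, h'⟩
      · exact hz1 ⟨h' ▸ h, h'⟩
    have hPb : ¬ P b := fun h => by
      rcases hProbMem b h with h' | h' | h'
      · exact hx2 ⟨h' ▸ h, h'⟩
      · exact hy2 ⟨h' ▸ h, h'⟩
      · exact hz2 ⟨h' ▸ h, h'⟩
    obtain ⟨ea, da⟩ := hstable a hau hav hPa h6a
    obtain ⟨eb, db⟩ := hstable b hbu hbv hPb h6b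
    rw [ea, eb]
    exact hψ'.1 a b hH' da db
  -- missing-color sets for the final coloring
  obtain ⟨Mx, hMxmem⟩ : ∃ M : Finset (Fin k), ∀ c : Fin k, c ∈ M ↔
      ((∀ w, H.Adj x w → ce1 s(x, w) ≠ c) ∧ (6 ≤ deg G x → cvF x ≠ c)) :=
    ⟨Finset.univ.filter (fun c => (∀ w, H.Adj x w → ce1 s(x, w) ≠ c) ∧ (6 ≤ deg G x → cvF x ≠ c)),
      fun c => by rw [Finset.mem_filter]; simp only [Finset.mem_univ, true_and]⟩
  obtain ⟨My, hMymem⟩ : ∃ M : Finset (Fin k), ∀ c : Fin k, c ∈ M ↔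
      ((∀ w, H.Adj y w → ce1 s(y, w) ≠ c) ∧ (6 ≤ deg G y → cvF y ≠ c)) :=
    ⟨Finset.univ.filter (fun c => (∀ w, H.Adj y w → ce1 s(y, w) ≠ c) ∧ (6 ≤ deg G y → cvF y ≠ c)),
      fun c => by rw [Finset.mem_filter]; simp only [Finset.mem_univ, true_and]⟩
  obtain ⟨Mz, hMzmem⟩ : ∃ M : Finset (Fin k), ∀ c : Fin k, c ∈ M ↔
      ((∀ w, H.Adj z w → ce1 s(z, w) ≠ c) ∧ (6 ≤ deg G z → cvF z ≠ c)) :=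
    ⟨Finset.univ.filter (fun c => (∀ w, H.Adj z w → ce1 s(z, w) ≠ c) ∧ (6 ≤ deg G z → cvF z ≠ c)),
      fun c => by rw [Finset.mem_filter]; simp only [Finset.mem_univ, true_and]⟩
  have hMcard : ∀ (t : V) (M : Finset (Fin k)),
      (∀ c : Fin k, c ∈ M ↔ ((∀ w, H.Adj t w → ce1 s(t, w) ≠ c) ∧ (6 ≤ deg G t → cvF t ≠ c))) →
      k ≤ M.card + deg H t + 1 := by
    intro t M hM
    set N := (H.neighborSet t).toFinite.toFinset with hN
    have hNc : N.card = deg H t := by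
      rw [hN]; exact (Set.ncard_eq_toFinset_card _ _).symm
    have hcover : (Finset.univ : Finset (Fin k)) ⊆
        M ∪ (N.image (fun w => ce1 s(t, w)) ∪ {cvF t}) := by
      intro c _
      by_cases hc : (∀ w, H.Adj t w → ce1 s(t, w) ≠ c) ∧ (6 ≤ deg G t → cvF t ≠ c)
      · exact Finset.mem_union_left _ ((hM c).mpr hc)
      · refine Finset.mem_union_right _ ?_
        rcases not_and_or.mp hc with h | h
        · push_neg at h
          obtain ⟨w, hw, heq⟩ := h
          exact Finset.mem_union_left _ (Finset.mem_image.mpr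
            ⟨w, by rw [hN, Set.Finite.mem_toFinset]; exact hw, heq⟩)
        · push_neg at h
          exact Finset.mem_union_right _ (by simp [h.2])
    have hb0 := Finset.card_le_card hcover
    have hb1 := Finset.card_union_le M (N.image (fun w => ce1 s(t, w)) ∪ {cvF t})
    have hb2 := Finset.card_union_le (N.image (fun w => ce1 s(t, w))) ({cvF t} : Finset (Fin k))
    have hb3 := Finset.card_image_le (s := N) (f := fun w => ce1 s(t, w))
    have hb4 : ({cvF t} : Finset (Fin k)).card = 1 := Finset.card_singleton _
    rw [Finset.card_univ, Fintype.card_fin] at hb0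
    omega
  have hMx2 : 2 ≤ Mx.card := by
    have h1 := hMcard x Mx hMxmem
    have h2 := hdeg2 x hux hvx
    have h3 := hdegG x
    clear * - h1 h2 h3 hk
    omega
  have hMy2 : 2 ≤ My.card := by
    have h1 := hMcard y My hMymem
    have h2 := hdeg2 y huy hvy
    have h3 := hdegG y
    clear * - h1 h2 h3 hk
    omega
  have hMz2 : 2 ≤ Mz.card := by
    have h1 := hMcard z Mz hMzmem
    have h2 := hdeg2 z huz hvz
    have h3 := hdegG z
    clear * - h1 h2 h3 hk
    omega
  have hMxP : P x → 5 ≤ Mx.card := by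
    intro hP
    have h1 := hMcard x Mx hMxmem
    have h2 := hP.2
    clear * - h1 h2 hk
    omega
  have hMyP : P y → 5 ≤ My.card := by
    intro hP
    have h1 := hMcard y My hMymem
    have h2 := hP.2
    clear * - h1 h2 hk
    omega
  have hMzP : P z → 5 ≤ Mz.card := by
    intro hP
    have h1 := hMcard z Mz hMzmem
    have h2 := hP.2
    clear * - h1 h2 hk
    omega
  -- c₁ is not missing at x or y (it is on the edge xy)
  have hc1Mx : c₁ ∉ Mx := by
    intro h
    exact ((hMxmem c₁).mp h).1 y hHxy hce1xy
  have hc1My : c₁ ∉ My := by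
    intro h
    refine ((hMymem c₁).mp h).1 x hHxy.symm ?_
    rw [show s(y, x) = s(x, y) from Sym2.eq_swap, hce1xy]
  -- z-memberships: edges at z are untouched
  have hsz : ∀ w : V, s(z, w) ≠ s(x, y) := by
    intro w h
    rw [Sym2.eq_iff] at h
    rcases h with ⟨h1, -⟩ | ⟨h1, -⟩
    · exact hxz h1.symm
    · exact hyz h1.symm
  have hmem_z : ∀ c : Fin k, MissingAt H cv ce z c → ¬ P z → c ∈ Mz := by
    intro c hm hPz
    refine (hMzmem c).mpr ⟨?_, ?_⟩
    · intro w hw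
      rw [hce1ne _ (hsz w)]
      exact hm.2 w hw
    · intro h6
      rw [hcvstz hPz]
      refine hm.1 ?_
      have h7 : ¬ (deg H z < 6) := fun hl => hPz ⟨h6, hl⟩
      clear * - h7
      omega
  have hmem_x : ∀ c : Fin k, MissingAt H cv ce x c → c ≠ c₁ → ¬ P x → c ∈ Mx := by
    intro c hm hne hPx
    refine (hMxmem c).mpr ⟨?_, ?_⟩
    · intro w hw
      by_cases he : s(x, w) = s(x, y)
      · rw [he, hce1xy]; exact Ne.symm hne
      · rw [hce1ne _ he]; exact hm.2 w hw
    · intro h6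
      rw [hcvstx hPx]
      refine hm.1 ?_
      have h7 : ¬ (deg H x < 6) := fun hl => hPx ⟨h6, hl⟩
      clear * - h7
      omega
  have hmem_y : ∀ c : Fin k, MissingAt H cv ce y c → c ≠ c₁ → ¬ P y → c ∈ My := by
    intro c hm hne hPy
    refine (hMymem c).mpr ⟨?_, ?_⟩
    · intro w hw
      by_cases he : s(y, w) = s(x, y)
      · rw [he, hce1xy]; exact Ne.symm hne
      · rw [hce1ne _ he]; exact hm.2 w hw
    · intro h6
      rw [hcvsty hPy]
      refine hm.1 ?_
      have h7 : ¬ (deg H y < 6) := fun hl => hPy ⟨h6, hl⟩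
      clear * - h7
      omega
  -- c₃ memberships
  have hc3Mx : ¬ P x → c₃ ∈ Mx := by
    intro hPx
    refine (hMxmem c₃).mpr ⟨?_, ?_⟩
    · intro w hw
      by_cases he : s(x, w) = s(x, y)
      · rw [he, hce1xy]; exact Ne.symm hc31
      · rw [hce1ne _ he]
        have hwy : w ≠ y := by
          intro h; exact he (by rw [h])
        intro h
        exact (hψ.2.1 x y w hHxy hw (Ne.symm hwy)) (by rw [hc3, ← h])
    · intro h6
      rw [hcvstx hPx]
      have hd : 6 ≤ deg H x := by
        have h7 : ¬ (deg H x < 6) := fun hl => hPx ⟨h6, hl⟩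
        clear * - h7
        omega
      intro h
      exact (hψ.2.2 x y hHxy hd) (by rw [hc3, ← h])
  have hc3My : ¬ P y → c₃ ∈ My := by
    intro hPy
    have hyx : s(y, x) = s(x, y) := Sym2.eq_swap
    refine (hMymem c₃).mpr ⟨?_, ?_⟩
    · intro w hw
      by_cases he : s(y, w) = s(x, y)
      · rw [he, hce1xy]; exact Ne.symm hc31
      · rw [hce1ne _ he]
        have hwx : w ≠ x := by
          intro h; exact he (by rw [h, hyx])
        intro h
        refine (hψ.2.1 y x w hHxy.symm hw (Ne.symm hwx)) ?_
        rw [hyx, hc3, ← h]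
    · intro h6
      rw [hcvsty hPy]
      have hd : 6 ≤ deg H y := by
        have h7 : ¬ (deg H y < 6) := fun hl => hPy ⟨h6, hl⟩
        clear * - h7
        omega
      intro h
      exact (hψ.2.2 y x hHxy.symm hd) (by rw [hyx, hc3, ← h])
  -- membership shortcuts for or-arguments
  have hu' : u = u ∨ u = v := Or.inl rfl
  have hv' : v = u ∨ v = v := Or.inr rfl
  have hx' : x = x ∨ x = y ∨ x = z := Or.inl rfl
  have hy' : y = x ∨ y = y ∨ y = z := Or.inr (Or.inl rfl)
  have hz' : z = x ∨ z = y ∨ z = z := Or.inr (Or.inr rfl)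
  have hdistinct : ∀ p q : V, (p = u ∨ p = v) → (q = x ∨ q = y ∨ q = z) → p ≠ q := by
    rintro p q (rfl | rfl) (rfl | rfl | rfl) <;>
      first
      | exact Ne.symm hxu
      | exact Ne.symm hyu
      | exact Ne.symm hzu
      | exact Ne.symm hxv
      | exact Ne.symm hyv
      | exact Ne.symm hzv
  have hkeyne : ∀ p q r t : V, (p = u ∨ p = v) → (q = x ∨ q = y ∨ q = z) →
      (r = u ∨ r = v) → (t = x ∨ t = y ∨ t = z) → ¬ (p = r ∧ q = t) → s(p, q) ≠ s(r, t) := by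
    intro p q r t hp hq hr ht hne h
    rw [Sym2.eq_iff] at h
    rcases h with ⟨h1, h2⟩ | ⟨h1, h2⟩
    · exact hne ⟨h1, h2⟩
    · exact hdistinct p t hp ht h1
  -- the main contradiction: a selection yields a nice coloring of G
  have hSelFalse : Sel Mx My Mz → False := by
    rintro ⟨a₁, ha1, a₂, ha2, a₃, ha3, b₁, hb1, b₂, hb2, b₃, hb3,
      q12, q13, q23, r12, r13, r23, s1, s2, s3⟩
    have hax := (hMxmem a₁).mp ha1
    have hay := (hMymem a₂).mp ha2
    have haz := (hMzmem a₃).mp ha3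
    have hbx := (hMxmem b₁).mp hb1
    have hby := (hMymem b₂).mp hb2
    have hbz := (hMzmem b₃).mp hb3
    apply hG
    set ceF : Sym2 V → Fin k := fun e =>
      if e = s(u, x) then a₁ else if e = s(u, y) then a₂ else if e = s(u, z) then a₃ else
      if e = s(v, x) then b₁ else if e = s(v, y) then b₂ else if e = s(v, z) then b₃ else
      ce1 e with hceFdef
    have n21 := hkeyne u y u x hu' hy' hu' hx' (fun h => hxy' h.2.symm)
    have n31 := hkeyne u z u x hu' hz' hu' hx' (fun h => hxz h.2.symm)
    have n32 := hkeyne u z u y hu' hz' hu' hy' (fun h => hyz h.2.symm)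
    have n41 := hkeyne v x u x hv' hx' hu' hx' (fun h => huv h.1.symm)
    have n42 := hkeyne v x u y hv' hx' hu' hy' (fun h => huv h.1.symm)
    have n43 := hkeyne v x u z hv' hx' hu' hz' (fun h => huv h.1.symm)
    have n51 := hkeyne v y u x hv' hy' hu' hx' (fun h => huv h.1.symm)
    have n52 := hkeyne v y u y hv' hy' hu' hy' (fun h => huv h.1.symm)
    have n53 := hkeyne v y u z hv' hy' hu' hz' (fun h => huv h.1.symm)
    have n54 := hkeyne v y v x hv' hy' hv' hx' (fun h => hxy' h.2.symm)
    have n61 := hkeyne v z u x hv' hz' hu' hx' (fun h => huv h.1.symm)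
    have n62 := hkeyne v z u y hv' hz' hu' hy' (fun h => huv h.1.symm)
    have n63 := hkeyne v z u z hv' hz' hu' hz' (fun h => huv h.1.symm)
    have n64 := hkeyne v z v x hv' hz' hv' hx' (fun h => hxz h.2.symm)
    have n65 := hkeyne v z v y hv' hz' hv' hy' (fun h => hyz h.2.symm)
    have e1 : ceF s(u, x) = a₁ := by simp only [hceFdef]; simp
    have e2 : ceF s(u, y) = a₂ := by simp only [hceFdef]; simp [n21]
    have e3 : ceF s(u, z) = a₃ := by simp only [hceFdef]; simp [n31, n32]
    have e4 : ceF s(v, x) = b₁ := by simp only [hceFdef]; simp [n41, n42, n43]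
    have e5 : ceF s(v, y) = b₂ := by simp only [hceFdef]; simp [n51, n52, n53, n54]
    have e6 : ceF s(v, z) = b₃ := by simp only [hceFdef]; simp [n61, n62, n63, n64, n65]
    have eH : ∀ p q : V, H.Adj p q → ceF s(p, q) = ce1 s(p, q) := by
      intro p q hpq
      obtain ⟨-, hpu, hqu, hpv, hqv⟩ := (hHadj p q).mp hpq
      have hne : ∀ r t : V, (r = u ∨ r = v) → (t = x ∨ t = y ∨ t = z) → s(p, q) ≠ s(r, t) := by
        intro r t hr ht h
        rw [Sym2.eq_iff] at h
        rcases h with ⟨h1, h2⟩ | ⟨h1, h2⟩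
        · rcases hr with rfl | rfl
          · exact hpu h1
          · exact hpv h1
        · rcases hr with rfl | rfl
          · exact hqu h2
          · exact hqv h2
      simp only [hceFdef]
      simp [hne u x hu' hx', hne u y hu' hy', hne u z hu' hz',
        hne v x hv' hx', hne v y hv' hy', hne v z hv' hz']
    refine ⟨cvF, ceF, hVne, ?_, ?_⟩
    · -- edge coloring is proper
      intro a b w hab haw hbw
      by_cases hau : a = u
      · have hb' : b = x ∨ b = y ∨ b = z := hNuMem b (by rw [← hau]; exact hab)
        have hw' : w = x ∨ w = y ∨ w = z := hNuMem w (by rw [← hau]; exact haw)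
        rw [hau]
        rcases hb' with rfl | rfl | rfl <;> rcases hw' with rfl | rfl | rfl <;>
          first
          | exact absurd rfl hbw
          | (rw [e1, e2]; exact q12)
          | (rw [e1, e3]; exact q13)
          | (rw [e2, e3]; exact q23)
          | (rw [e2, e1]; exact q12.symm)
          | (rw [e3, e1]; exact q13.symm)
          | (rw [e3, e2]; exact q23.symm)
      by_cases hav : a = v
      · have hb' : b = x ∨ b = y ∨ b = z := hNvMem b (by rw [← hav]; exact hab)
        have hw' : w = x ∨ w = y ∨ w = z := hNvMem w (by rw [← hav]; exact haw)
        rw [hav]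
        rcases hb' with rfl | rfl | rfl <;> rcases hw' with rfl | rfl | rfl <;>
          first
          | exact absurd rfl hbw
          | (rw [e4, e5]; exact r12)
          | (rw [e4, e6]; exact r13)
          | (rw [e5, e6]; exact r23)
          | (rw [e5, e4]; exact r12.symm)
          | (rw [e6, e4]; exact r13.symm)
          | (rw [e6, e5]; exact r23.symm)
      by_cases hbu : b = u
      · have ha' : a = x ∨ a = y ∨ a = z := hNuMem a (by rw [← hbu]; exact hab.symm)
        rw [hbu, show s(a, u) = s(u, a) from Sym2.eq_swap]
        by_cases hwv : w = v
        · rw [hwv, show s(a, v) = s(v, a) from Sym2.eq_swap]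
          rcases ha' with rfl | rfl | rfl
          · rw [e1, e4]; exact s1
          · rw [e2, e5]; exact s2
          · rw [e3, e6]; exact s3
        · have hwu : w ≠ u := fun h => hbw (by rw [hbu, h])
          have hHaw : H.Adj a w := (hHadj a w).mpr ⟨haw, hau, hwu, hav, hwv⟩
          rw [eH a w hHaw]
          rcases ha' with rfl | rfl | rfl
          · rw [e1]; exact fun h => hax.1 w hHaw h.symm
          · rw [e2]; exact fun h => hay.1 w hHaw h.symm
          · rw [e3]; exact fun h => haz.1 w hHaw h.symm
      by_cases hbv : b = v
      · have ha' : a = x ∨ a = y ∨ a = z := hNvMem a (by rw [← hbv]; exact hab.symm)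
        rw [hbv, show s(a, v) = s(v, a) from Sym2.eq_swap]
        by_cases hwu : w = u
        · rw [hwu, show s(a, u) = s(u, a) from Sym2.eq_swap]
          rcases ha' with rfl | rfl | rfl
          · rw [e4, e1]; exact s1.symm
          · rw [e5, e2]; exact s2.symm
          · rw [e6, e3]; exact s3.symm
        · have hwv : w ≠ v := fun h => hbw (by rw [hbv, h])
          have hHaw : H.Adj a w := (hHadj a w).mpr ⟨haw, hau, hwu, hav, hwv⟩
          rw [eH a w hHaw]
          rcases ha' with rfl | rfl | rfl
          · rw [e4]; exact fun h => hbx.1 w hHaw h.symm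
          · rw [e5]; exact fun h => hby.1 w hHaw h.symm
          · rw [e6]; exact fun h => hbz.1 w hHaw h.symm
      · -- b ∉ {u, v}
        have hHab : H.Adj a b := (hHadj a b).mpr ⟨hab, hau, hbu, hav, hbv⟩
        rw [eH a b hHab]
        by_cases hwu : w = u
        · have ha' : a = x ∨ a = y ∨ a = z := hNuMem a (by rw [← hwu]; exact haw.symm)
          rw [hwu, show s(a, u) = s(u, a) from Sym2.eq_swap]
          rcases ha' with rfl | rfl | rfl
          · rw [e1]; exact hax.1 b hHab
          · rw [e2]; exact hay.1 b hHab
          · rw [e3]; exact haz.1 b hHab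
        · by_cases hwv : w = v
          · have ha' : a = x ∨ a = y ∨ a = z := hNvMem a (by rw [← hwv]; exact haw.symm)
            rw [hwv, show s(a, v) = s(v, a) from Sym2.eq_swap]
            rcases ha' with rfl | rfl | rfl
            · rw [e4]; exact hbx.1 b hHab
            · rw [e5]; exact hby.1 b hHab
            · rw [e6]; exact hbz.1 b hHab
          · have hHaw : H.Adj a w := (hHadj a w).mpr ⟨haw, hau, hwu, hav, hwv⟩
            rw [eH a w hHaw]
            exact hψ'.2.1 a b w hHab hHaw hbw
    · -- vertex-edge condition
      intro a b hab h6a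
      have hau : a ≠ u := by
        intro h; rw [h, hu3] at h6a; clear * - h6a; omega
      have hav : a ≠ v := by
        intro h; rw [h, hv3] at h6a; clear * - h6a; omega
      by_cases hbu : b = u
      · have ha' : a = x ∨ a = y ∨ a = z := hNuMem a (by rw [← hbu]; exact hab.symm)
        rw [hbu, show s(a, u) = s(u, a) from Sym2.eq_swap]
        rcases ha' with rfl | rfl | rfl
        · rw [e1]; exact hax.2 h6a
        · rw [e2]; exact hay.2 h6a
        · rw [e3]; exact haz.2 h6a
      by_cases hbv : b = v
      · have ha' : a = x ∨ a = y ∨ a = z := hNvMem a (by rw [← hbv]; exact hab.symm)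
        rw [hbv, show s(a, v) = s(v, a) from Sym2.eq_swap]
        rcases ha' with rfl | rfl | rfl
        · rw [e4]; exact hbx.2 h6a
        · rw [e5]; exact hby.2 h6a
        · rw [e6]; exact hbz.2 h6a
      · have hHab : H.Adj a b := (hHadj a b).mpr ⟨hab, hau, hbu, hav, hbv⟩
        rw [eH a b hHab]
        by_cases hPa : P a
        · rcases hProbMem a hPa with h | h | h
          · rw [h]; exact (hAvoid_x (by rw [← h]; exact hPa) b (by rw [← h]; exact hHab)).1
          · rw [h]; exact (hAvoid_y (by rw [← h]; exact hPa) b (by rw [← h]; exact hHab)).1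
          · rw [h]; exact (hAvoid_z (by rw [← h]; exact hPa) b (by rw [← h]; exact hHab)).1
        · obtain ⟨ea, da⟩ := hstable a hau hav hPa h6a
          rw [ea]
          exact hψ'.2.2 a b hHab da
  -- final case analysis
  by_cases hPz : P z
  · exact absurd (sel3 Mx My Mz hMx2 hMy2 (by
      have h5 := hMzP hPz; clear * - h5; omega)) hSelFalse
  · have hc1Mz : c₁ ∈ Mz := hmem_z c₁ (hmz c₁ hc1z) hPz
    rcases sel2 Mx My Mz hMx2 hMy2 hMz2 c₁ hc1Mz hc1Mx hc1My with hsel | ⟨hA2, hB2, hsub⟩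
    · exact absurd hsel hSelFalse
    · have hPx : ¬ P x := fun h => by
        have h5 := hMxP h; clear * - h5 hA2; omega
      have hPy : ¬ P y := fun h => by
        have h5 := hMyP h; clear * - h5 hB2; omega
      have hc2Mx : c₂ ∈ Mx := hmem_x c₂ (hmx c₂ hc2x) (Ne.symm h12) hPx
      have hc3Mx' : c₃ ∈ Mx := hc3Mx hPx
      have hc3My' : c₃ ∈ My := hc3My hPy
      obtain ⟨d, hd1, hCyE⟩ := pair_split hCy hc1y
      obtain ⟨e, he1, hCzE⟩ := pair_split hCz hc1z
      have hdCy : d ∈ Cy := by rw [hCyE]; simp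
      have hdMy : d ∈ My := hmem_y d (hmy d hdCy) hd1 hPy
      have hd3 : d ≠ c₃ := by
        intro h
        refine (hmy d hdCy).2 x hHxy.symm ?_
        rw [show s(y, x) = s(x, y) from Sym2.eq_swap, hc3, h]
      have heCz : e ∈ Cz := by rw [hCzE]; simp
      have heMz : e ∈ Mz := hmem_z e (hmz e heCz) hPz
      have heAB := hsub (Finset.mem_sdiff.mpr ⟨heMz, by simpa using he1⟩)
      have heMx : e ∈ Mx := (Finset.mem_inter.mp heAB).1
      have heMy : e ∈ My := (Finset.mem_inter.mp heAB).2
      rcases mem_of_card_two hA2 hc2Mx hc3Mx' (Ne.symm hc32) heMx with he2 | he3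
      · -- e = c₂, so Cy = Cz = {c₁, c₂}
        right
        have hd2 : d = c₂ := by
          rcases mem_of_card_two hB2 hdMy hc3My' hd3 (he2 ▸ heMy) with h | h
          · exact h.symm
          · exact absurd h.symm hc32
        constructor
        · rw [hCyE, hd2]
        · rw [hCzE, he2]
      · left
        rw [hCzE, he3]
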